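/- Every edge-coloring of the complete graph K_n (n ≥ 2) that contains no monochromatic triangle admits a properly colored Hamilton path, i.e., a Hamilton path in which consecutive edges receive distinct colors. -/

import Mathlib

/-- An edge-colored graph (with total symmetric coloring `col`) contains a
monochromatic triangle. -/
def HasMonoTriangle {V : Type*} (col : V → V → ℕ) : Prop :=
  ∃ x y z : V, x ≠ y ∧ y ≠ z ∧ x ≠ z ∧ col x y = col y z ∧ col x y = col x z

/-- `c : ZMod ℓ → V` is a properly colored cycle of length `ℓ` in the
edge-colored complete graph with coloring `col`. -/
def IsPCCycle {V : Type*} {ℓ : ℕ} (col : V → V → ℕ) (c : ZMod ℓ → V) : Prop :=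
  Function.Injective c ∧
    ∀ i : ZMod ℓ, col (c i) (c (i + 1)) ≠ col (c (i + 1)) (c (i + 2))

/-- There is a properly colored cycle of length `ℓ` through `v`. -/
def PCThrough {V : Type*} (col : V → V → ℕ) (ℓ : ℕ) (v : V) : Prop :=
  ∃ c : ZMod ℓ → V, IsPCCycle col c ∧ ∃ i, c i = v

/-- `S` is a degenerate set of the edge-colored complete graph `col`. -/
def DegenSet {V : Type*} (col : V → V → ℕ) (S : Set V) : Prop :=
  S.Nonempty ∧ ∃ f : V → ℕ,
    (∀ u ∈ S, ∀ v ∈ S, u ≠ v → col u v = f u ∨ col u v = f v) ∧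
    (∀ u ∈ S, ∀ v, v ∉ S → col u v = f u)

section Aux

variable {V : Type*}

/-- A list is properly colored: consecutive edges get distinct colors. -/
def PCL (col : V → V → ℕ) : List V → Prop
  | a :: b :: c :: l => col a b ≠ col b c ∧ PCL col (b :: c :: l)
  | _ => True

lemma pcl_short (col : V → V → ℕ) (l : List V) (h : l.length ≤ 2) : PCL col l := by
  match l with
  | [] => trivial
  | [a] => trivial
  | [a, b] => trivial
  | a :: b :: c :: t => simp at h

lemma pcl_cons3 (col : V → V → ℕ) (a b c : V) (l : List V) :
    PCL col (a :: b :: c :: l) ↔ col a b ≠ col b c ∧ PCL col (b :: c :: l) := Iff.rfl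

lemma pcl_tail (col : V → V → ℕ) (a : V) (l : List V) (h : PCL col (a :: l)) :
    PCL col l := by
  match l, h with
  | [], _ => trivial
  | [b], _ => trivial
  | b :: c :: t, h => exact h.2

lemma insert_aux (col : V → V → ℕ) (hsym : ∀ u v, col u v = col v u)
    (hmono : ¬ HasMonoTriangle col) :
    ∀ (l : List V) (a v : V), l.Nodup → v ≠ a → v ∉ l → a ∉ l → PCL col (a :: l) →
      (∀ x, l.head? = some x → col v a = col a x) →
      ∃ b l₂, (v :: l).Perm (b :: l₂) ∧ PCL col (a :: b :: l₂) ∧ col a b = col v a := by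
  intro l
  induction l with
  | nil =>
    intro a v _ hva _ _ _ _
    exact ⟨v, [], List.Perm.refl _, pcl_short _ _ (by simp), hsym a v⟩
  | cons b t ih =>
    intro a v hnd hva hvl hal hpc hd
    have hdab : col v a = col a b := hd b rfl
    have hvb : v ≠ b := by simp at hvl; tauto
    have hab : a ≠ b := by simp at hal; tauto
    have hvt : v ∉ t := by simp at hvl; tauto
    have hat : a ∉ t := by simp at hal; tauto
    have hvbne : col v b ≠ col v a := fun h =>
      hmono ⟨v, a, b, hva, hab, hvb, hdab, h.symm ▸ rfl⟩
    rcases t with _ | ⟨c, t'⟩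
    · -- path a, v, b
      refine ⟨v, [b], List.Perm.refl _, ?_, hsym a v⟩
      rw [pcl_cons3]
      refine ⟨?_, pcl_short _ _ (by simp)⟩
      rw [hsym a v]
      exact fun h => hvbne h.symm
    · by_cases hbc : col v b = col b c
      · have hbt : b ∉ (c :: t') := by
          rw [List.nodup_cons] at hnd; exact hnd.1
        have hnd' : (c :: t').Nodup := by
          rw [List.nodup_cons] at hnd; exact hnd.2
        obtain ⟨b', l₂, hperm, hpc', hcol⟩ :=
          ih b v hnd' hvb hvt hbt (pcl_tail _ _ _ hpc)
            (fun x hx => by simp at hx; subst hx; exact hbc)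
        refine ⟨b, b' :: l₂, ?_, ?_, hdab.symm⟩
        · exact (List.Perm.swap b v _).trans (hperm.cons b)
        · rw [pcl_cons3]
          refine ⟨?_, hpc'⟩
          rw [hcol, ← hdab]
          exact fun h => hvbne (h.symm)
      · refine ⟨v, b :: c :: t', List.Perm.refl _, ?_, hsym a v⟩
        rw [pcl_cons3]
        constructor
        · rw [hsym a v]; exact fun h => hvbne h.symm
        · rw [pcl_cons3]
          exact ⟨hbc, pcl_tail _ _ _ hpc⟩

lemma pc_insert (col : V → V → ℕ) (hsym : ∀ u v, col u v = col v u)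
    (hmono : ¬ HasMonoTriangle col) (l : List V) (hnd : l.Nodup) (v : V)
    (hv : v ∉ l) (hpc : PCL col l) :
    ∃ l', (v :: l).Perm l' ∧ PCL col l' := by
  rcases l with _ | ⟨a, t⟩
  · exact ⟨[v], List.Perm.refl _, trivial⟩
  rcases t with _ | ⟨b, t'⟩
  · exact ⟨[v, a], List.Perm.refl _, pcl_short _ _ (by simp)⟩
  by_cases h : col v a = col a b
  · have hva : v ≠ a := by simp at hv; tauto
    have hvt : v ∉ b :: t' := by simp at hv ⊢; tauto
    have hat : a ∉ b :: t' := by simp at hnd ⊢; tauto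
    obtain ⟨b', l₂, hperm, hpc', _⟩ :=
      insert_aux col hsym hmono (b :: t') a v ((List.nodup_cons.mp hnd).2) hva hvt hat hpc
        (fun x hx => by simp at hx; subst hx; exact h)
    exact ⟨a :: b' :: l₂, (List.Perm.swap a v _).trans (hperm.cons a), hpc'⟩
  · exact ⟨v :: a :: b :: t', List.Perm.refl _, by rw [pcl_cons3]; exact ⟨h, hpc⟩⟩

lemma pc_build (col : V → V → ℕ) (hsym : ∀ u v, col u v = col v u)
    (hmono : ¬ HasMonoTriangle col) :
    ∀ s : List V, s.Nodup → ∃ l, s.Perm l ∧ PCL col l := by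
  intro s
  induction s with
  | nil => exact fun _ => ⟨[], List.Perm.refl _, trivial⟩
  | cons v s ih =>
    intro hnd
    rw [List.nodup_cons] at hnd
    obtain ⟨l, hp, hpc⟩ := ih hnd.2
    have hvl : v ∉ l := fun h => hnd.1 (hp.mem_iff.mpr h)
    obtain ⟨l', hp', hpc'⟩ := pc_insert col hsym hmono l (hp.nodup hnd.2) v hvl hpc
    exact ⟨l', (hp.cons v).trans hp', hpc'⟩

lemma pcl_get (col : V → V → ℕ) :
    ∀ (l : List V), PCL col l → ∀ (i : ℕ) (h : i + 2 < l.length),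
      col (l.get ⟨i, by omega⟩) (l.get ⟨i + 1, by omega⟩) ≠
        col (l.get ⟨i + 1, by omega⟩) (l.get ⟨i + 2, by omega⟩) := by
  intro l
  induction l with
  | nil => intro _ i h; simp at h
  | cons a t ih =>
    intro hpc i h
    rcases t with _ | ⟨b, t'⟩
    · simp at h
    rcases t' with _ | ⟨c, t''⟩
    · simp at h
    rcases i with _ | j
    · exact hpc.1
    · exact ih hpc.2 j (by simpa using h)

end Aux

/-- Every edge-coloring of $K_n$ ($n ≥ 2$) with no monochromatic triangle
admits a properly colored Hamilton path. -/
theorem pc_hamilton_path_of_no_mono_triangle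
    (n : ℕ) (hn : 2 ≤ n) (col : Fin n → Fin n → ℕ)
    (hsym : ∀ u v, col u v = col v u)
    (hmono : ¬ HasMonoTriangle col) :
    ∃ p : Fin n → Fin n, Function.Bijective p ∧
      ∀ i : ℕ, ∀ h : i + 2 < n,
        col (p ⟨i, by omega⟩) (p ⟨i + 1, by omega⟩) ≠
          col (p ⟨i + 1, by omega⟩) (p ⟨i + 2, by omega⟩) := by
  obtain ⟨l, hp, hpc⟩ :=
    pc_build col hsym hmono (List.finRange n) (List.nodup_finRange n)
  have hlen : l.length = n := by
    have := hp.length_eq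
    simpa using this.symm
  refine ⟨fun i => l.get (Fin.cast hlen.symm i), ?_, ?_⟩
  · have hinj : Function.Injective l.get :=
      List.nodup_iff_injective_get.mp (hp.nodup (List.nodup_finRange n))
    have : Function.Injective fun i : Fin n => l.get (Fin.cast hlen.symm i) :=
      fun x y hxy => by
        have := hinj hxy
        exact Fin.cast_injective _ this
    exact Finite.injective_iff_bijective.mp this
  · intro i h
    have := pcl_get col l hpc i (by omega)
    convert this using 2 <;> rfl
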